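/- Let x, x', y ∈ ℝ² and let ρ, ξ, α, β be nonnegative reals satisfying ‖x‖ ≤ ρ+α, ‖x'‖ ≤ ρ+α, ‖x−x'‖ ≥ 2ρ, ‖y‖ ≤ β, ‖x−y‖ ≥ ρ+ξ, and ‖x'−y‖ ≥ ρ+ξ. Then 2ρξ + ξ² ≤ 2ρα + β² + α² + 2β·√(2ρα + α²). -/

import Mathlib

set_option maxHeartbeats 800000


/-- The key geometric inequality in the proof that two accessible far buckets squeeze
out intermediate ones. -/
theorem squeeze_inequality (x x' y : EuclideanSpace ℝ (Fin 2)) (ρ ξ α β : ℝ)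
    (hρ : 0 ≤ ρ) (hξ : 0 ≤ ξ) (hα : 0 ≤ α) (hβ : 0 ≤ β)
    (hx : ‖x‖ ≤ ρ + α) (hx' : ‖x'‖ ≤ ρ + α) (hxx' : 2 * ρ ≤ ‖x - x'‖)
    (hy : ‖y‖ ≤ β) (hxy : ρ + ξ ≤ ‖x - y‖) (hx'y : ρ + ξ ≤ ‖x' - y‖) :
    2 * ρ * ξ + ξ ^ 2 ≤
      2 * ρ * α + β ^ 2 + α ^ 2 + 2 * β * Real.sqrt (2 * ρ * α + α ^ 2) := by
  set s : ℝ := 2 * ρ * α + α ^ 2 with hs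
  have hs0 : 0 ≤ s := by positivity
  have hsq : Real.sqrt s ^ 2 = s := Real.sq_sqrt hs0
  have hsqnn : 0 ≤ Real.sqrt s := Real.sqrt_nonneg s
  -- squared hypotheses
  have h1 : (ρ + ξ) ^ 2 ≤ ‖x - y‖ ^ 2 := pow_le_pow_left₀ (by positivity) hxy 2
  have h2 : (ρ + ξ) ^ 2 ≤ ‖x' - y‖ ^ 2 := pow_le_pow_left₀ (by positivity) hx'y 2
  have hx2 : ‖x‖ ^ 2 ≤ (ρ + α) ^ 2 := pow_le_pow_left₀ (norm_nonneg _) hx 2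
  have hx'2 : ‖x'‖ ^ 2 ≤ (ρ + α) ^ 2 := pow_le_pow_left₀ (norm_nonneg _) hx' 2
  have hy2 : ‖y‖ ^ 2 ≤ β ^ 2 := pow_le_pow_left₀ (norm_nonneg _) hy 2
  have hxx'2 : (2 * ρ) ^ 2 ≤ ‖x - x'‖ ^ 2 := pow_le_pow_left₀ (by positivity) hxx' 2
  -- expansions
  have e1 : ‖x - y‖ ^ 2 = ‖x‖ ^ 2 - 2 * (inner ℝ x y : ℝ) + ‖y‖ ^ 2 := norm_sub_sq_real x y
  have e2 : ‖x' - y‖ ^ 2 = ‖x'‖ ^ 2 - 2 * (inner ℝ x' y : ℝ) + ‖y‖ ^ 2 := norm_sub_sq_real x' y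
  have e3 : ‖x + x'‖ ^ 2 = ‖x‖ ^ 2 + 2 * (inner ℝ x x' : ℝ) + ‖x'‖ ^ 2 := norm_add_sq_real x x'
  have e4 : ‖x - x'‖ ^ 2 = ‖x‖ ^ 2 - 2 * (inner ℝ x x' : ℝ) + ‖x'‖ ^ 2 := norm_sub_sq_real x x'
  -- ‖x + x'‖ ≤ 2 √s
  have hsum2 : ‖x + x'‖ ^ 2 ≤ (2 * Real.sqrt s) ^ 2 := by nlinarith
  have hsum : ‖x + x'‖ ≤ 2 * Real.sqrt s :=
    (pow_le_pow_iff_left₀ (norm_nonneg _) (by positivity) two_ne_zero).mp hsum2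
  -- inner product bound
  have hip : -(‖x + x'‖ * ‖y‖) ≤ (inner ℝ (x + x') y : ℝ) :=
    neg_abs_le _ |>.trans' (by simpa using neg_le_neg (abs_real_inner_le_norm (x + x') y))
  have hadd : (inner ℝ (x + x') y : ℝ) = (inner ℝ x y : ℝ) + (inner ℝ x' y : ℝ) := inner_add_left x x' y
  have hprod : ‖x + x'‖ * ‖y‖ ≤ 2 * Real.sqrt s * β :=
    mul_le_mul hsum hy (norm_nonneg _) (by positivity)
  nlinarith [h1, h2, e1, e2, hx2, hx'2, hy2, hip, hadd, hprod]
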